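/- Let Ω be a smooth function of (w,z,w̃,z̃) satisfying the first heavenly equation Ω_{wz̃}Ω_{zw̃} − Ω_{ww̃}Ω_{zz̃} = 1. Then for every λ the vector fields L₀ = Ω_{ww̃}∂_{z̃} − Ω_{wz̃}∂_{w̃} − λ∂_w and L₁ = Ω_{zw̃}∂_{z̃} − Ω_{zz̃}∂_{w̃} − λ∂_z satisfy [L₀, L₁] = 0. -/

import Mathlib

/-- Partial derivative with respect to the first variable `w`. -/
noncomputable def pw (f : ℂ → ℂ → ℂ → ℂ → ℂ) : ℂ → ℂ → ℂ → ℂ → ℂ :=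
  fun w z tw tz => deriv (fun t => f t z tw tz) w

/-- Partial derivative with respect to the second variable `z`. -/
noncomputable def pz (f : ℂ → ℂ → ℂ → ℂ → ℂ) : ℂ → ℂ → ℂ → ℂ → ℂ :=
  fun w z tw tz => deriv (fun t => f w t tw tz) z

/-- Partial derivative with respect to the third variable `w̃`. -/
noncomputable def ptw (f : ℂ → ℂ → ℂ → ℂ → ℂ) : ℂ → ℂ → ℂ → ℂ → ℂ :=
  fun w z tw tz => deriv (fun t => f w z t tz) tw

/-- Partial derivative with respect to the fourth variable `z̃`. -/
noncomputable def ptz (f : ℂ → ℂ → ℂ → ℂ → ℂ) : ℂ → ℂ → ℂ → ℂ → ℂ :=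
  fun w z tw tz => deriv (fun t => f w z tw t) tz

/-- Smoothness of a function of four complex variables. -/
def Smooth4 (f : ℂ → ℂ → ℂ → ℂ → ℂ) : Prop :=
  ContDiff ℂ ⊤ (fun p : ℂ × ℂ × ℂ × ℂ => f p.1 p.2.1 p.2.2.1 p.2.2.2)

/-- L₀ = Ω_{ww̃}∂_{z̃} − Ω_{wz̃}∂_{w̃} − λ∂_w, acting on functions. -/
noncomputable def LaxL0 (Ω : ℂ → ℂ → ℂ → ℂ → ℂ) (lam : ℂ)
    (g : ℂ → ℂ → ℂ → ℂ → ℂ) : ℂ → ℂ → ℂ → ℂ → ℂ :=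
  fun w z tw tz =>
    ptw (pw Ω) w z tw tz * ptz g w z tw tz
      - ptz (pw Ω) w z tw tz * ptw g w z tw tz
      - lam * pw g w z tw tz

/-- L₁ = Ω_{zw̃}∂_{z̃} − Ω_{zz̃}∂_{w̃} − λ∂_z, acting on functions. -/
noncomputable def LaxL1 (Ω : ℂ → ℂ → ℂ → ℂ → ℂ) (lam : ℂ)
    (g : ℂ → ℂ → ℂ → ℂ → ℂ) : ℂ → ℂ → ℂ → ℂ → ℂ :=
  fun w z tw tz =>
    ptw (pz Ω) w z tw tz * ptz g w z tw tz
      - ptz (pz Ω) w z tw tz * ptw g w z tw tz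
      - lam * pz g w z tw tz

namespace HeavenlyAux

/-- Uncurried version of a function of four complex variables. -/
abbrev U4 (f : ℂ → ℂ → ℂ → ℂ → ℂ) : ℂ × ℂ × ℂ × ℂ → ℂ :=
  fun p => f p.1 p.2.1 p.2.2.1 p.2.2.2

abbrev e1 : ℂ × ℂ × ℂ × ℂ := (1,0,0,0)
abbrev e2 : ℂ × ℂ × ℂ × ℂ := (0,1,0,0)
abbrev e3 : ℂ × ℂ × ℂ × ℂ := (0,0,1,0)
abbrev e4 : ℂ × ℂ × ℂ × ℂ := (0,0,0,1)

lemma pw_eq {f : ℂ → ℂ → ℂ → ℂ → ℂ} (hf : Smooth4 f) (w z tw tz : ℂ) :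
    pw f w z tw tz = fderiv ℂ (U4 f) (w,z,tw,tz) e1 := by
  have hd : HasFDerivAt (U4 f) (fderiv ℂ (U4 f) (w,z,tw,tz)) (w,z,tw,tz) :=
    ((hf.differentiable (by simp)) (w,z,tw,tz)).hasFDerivAt
  have hline : HasDerivAt (fun t : ℂ => ((t, z, tw, tz) : ℂ × ℂ × ℂ × ℂ)) e1 w :=
    (hasDerivAt_id w).prodMk ((hasDerivAt_const w z).prodMk
      ((hasDerivAt_const w tw).prodMk (hasDerivAt_const w tz)))
  exact (hd.comp_hasDerivAt w hline).deriv

lemma pz_eq {f : ℂ → ℂ → ℂ → ℂ → ℂ} (hf : Smooth4 f) (w z tw tz : ℂ) :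
    pz f w z tw tz = fderiv ℂ (U4 f) (w,z,tw,tz) e2 := by
  have hd : HasFDerivAt (U4 f) (fderiv ℂ (U4 f) (w,z,tw,tz)) (w,z,tw,tz) :=
    ((hf.differentiable (by simp)) (w,z,tw,tz)).hasFDerivAt
  have hline : HasDerivAt (fun t : ℂ => ((w, t, tw, tz) : ℂ × ℂ × ℂ × ℂ)) e2 z :=
    (hasDerivAt_const z w).prodMk ((hasDerivAt_id z).prodMk
      ((hasDerivAt_const z tw).prodMk (hasDerivAt_const z tz)))
  exact (hd.comp_hasDerivAt z hline).deriv

lemma ptw_eq {f : ℂ → ℂ → ℂ → ℂ → ℂ} (hf : Smooth4 f) (w z tw tz : ℂ) :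
    ptw f w z tw tz = fderiv ℂ (U4 f) (w,z,tw,tz) e3 := by
  have hd : HasFDerivAt (U4 f) (fderiv ℂ (U4 f) (w,z,tw,tz)) (w,z,tw,tz) :=
    ((hf.differentiable (by simp)) (w,z,tw,tz)).hasFDerivAt
  have hline : HasDerivAt (fun t : ℂ => ((w, z, t, tz) : ℂ × ℂ × ℂ × ℂ)) e3 tw :=
    (hasDerivAt_const tw w).prodMk ((hasDerivAt_const tw z).prodMk
      ((hasDerivAt_id tw).prodMk (hasDerivAt_const tw tz)))
  exact (hd.comp_hasDerivAt tw hline).deriv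

lemma ptz_eq {f : ℂ → ℂ → ℂ → ℂ → ℂ} (hf : Smooth4 f) (w z tw tz : ℂ) :
    ptz f w z tw tz = fderiv ℂ (U4 f) (w,z,tw,tz) e4 := by
  have hd : HasFDerivAt (U4 f) (fderiv ℂ (U4 f) (w,z,tw,tz)) (w,z,tw,tz) :=
    ((hf.differentiable (by simp)) (w,z,tw,tz)).hasFDerivAt
  have hline : HasDerivAt (fun t : ℂ => ((w, z, tw, t) : ℂ × ℂ × ℂ × ℂ)) e4 tz :=
    (hasDerivAt_const tz w).prodMk ((hasDerivAt_const tz z).prodMk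
      ((hasDerivAt_const tz tw).prodMk (hasDerivAt_id tz)))
  exact (hd.comp_hasDerivAt tz hline).deriv

lemma U4_pw {f} (hf : Smooth4 f) : U4 (pw f) = fun p => fderiv ℂ (U4 f) p e1 := by
  funext p; exact pw_eq hf p.1 p.2.1 p.2.2.1 p.2.2.2
lemma U4_pz {f} (hf : Smooth4 f) : U4 (pz f) = fun p => fderiv ℂ (U4 f) p e2 := by
  funext p; exact pz_eq hf p.1 p.2.1 p.2.2.1 p.2.2.2
lemma U4_ptw {f} (hf : Smooth4 f) : U4 (ptw f) = fun p => fderiv ℂ (U4 f) p e3 := by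
  funext p; exact ptw_eq hf p.1 p.2.1 p.2.2.1 p.2.2.2
lemma U4_ptz {f} (hf : Smooth4 f) : U4 (ptz f) = fun p => fderiv ℂ (U4 f) p e4 := by
  funext p; exact ptz_eq hf p.1 p.2.1 p.2.2.1 p.2.2.2

lemma sm_fderiv_apply {f} (hf : Smooth4 f) (v : ℂ × ℂ × ℂ × ℂ) :
    ContDiff ℂ ⊤ (fun p => fderiv ℂ (U4 f) p v) :=
  (hf.fderiv_right le_top).clm_apply contDiff_const

lemma smPw {f} (hf : Smooth4 f) : Smooth4 (pw f) := by
  have h := sm_fderiv_apply hf e1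
  rw [← U4_pw hf] at h
  exact h
lemma smPz {f} (hf : Smooth4 f) : Smooth4 (pz f) := by
  have h := sm_fderiv_apply hf e2
  rw [← U4_pz hf] at h
  exact h
lemma smPtw {f} (hf : Smooth4 f) : Smooth4 (ptw f) := by
  have h := sm_fderiv_apply hf e3
  rw [← U4_ptw hf] at h
  exact h
lemma smPtz {f} (hf : Smooth4 f) : Smooth4 (ptz f) := by
  have h := sm_fderiv_apply hf e4
  rw [← U4_ptz hf] at h
  exact h

lemma symm4 {f} (hf : Smooth4 f) (p u v : ℂ × ℂ × ℂ × ℂ) :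
    fderiv ℂ (fun q => fderiv ℂ (U4 f) q v) p u
      = fderiv ℂ (fun q => fderiv ℂ (U4 f) q u) p v := by
  have hd : ∀ y, HasFDerivAt (U4 f) (fderiv ℂ (U4 f) y) y :=
    fun y => ((hf.differentiable (by simp)) y).hasFDerivAt
  have h2 : HasFDerivAt (fderiv ℂ (U4 f)) (fderiv ℂ (fderiv ℂ (U4 f)) p) p :=
    (((hf.fderiv_right (m := ⊤) le_top).differentiable (by simp)) p).hasFDerivAt
  have key : ∀ x : ℂ × ℂ × ℂ × ℂ,
      fderiv ℂ (fun q => fderiv ℂ (U4 f) q x) p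
        = (fderiv ℂ (fderiv ℂ (U4 f)) p).flip x := by
    intro x
    have hc : DifferentiableAt ℂ (fderiv ℂ (U4 f)) p := h2.differentiableAt
    have := fderiv_clm_apply hc (differentiableAt_const x)
    simpa using this
  rw [key v, key u]
  simp only [ContinuousLinearMap.flip_apply]
  exact second_derivative_symmetric hd h2 u v

section comm

variable {f : ℂ → ℂ → ℂ → ℂ → ℂ}

lemma comm_pw_pz (hf : Smooth4 f) : pw (pz f) = pz (pw f) := by
  funext w z tw tz
  rw [pw_eq (smPz hf), pz_eq (smPw hf), U4_pz hf, U4_pw hf]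
  exact symm4 hf (w,z,tw,tz) e1 e2

lemma comm_pw_ptw (hf : Smooth4 f) : pw (ptw f) = ptw (pw f) := by
  funext w z tw tz
  rw [pw_eq (smPtw hf), ptw_eq (smPw hf), U4_ptw hf, U4_pw hf]
  exact symm4 hf (w,z,tw,tz) e1 e3

lemma comm_pw_ptz (hf : Smooth4 f) : pw (ptz f) = ptz (pw f) := by
  funext w z tw tz
  rw [pw_eq (smPtz hf), ptz_eq (smPw hf), U4_ptz hf, U4_pw hf]
  exact symm4 hf (w,z,tw,tz) e1 e4

lemma comm_pz_ptw (hf : Smooth4 f) : pz (ptw f) = ptw (pz f) := by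
  funext w z tw tz
  rw [pz_eq (smPtw hf), ptw_eq (smPz hf), U4_ptw hf, U4_pz hf]
  exact symm4 hf (w,z,tw,tz) e2 e3

lemma comm_pz_ptz (hf : Smooth4 f) : pz (ptz f) = ptz (pz f) := by
  funext w z tw tz
  rw [pz_eq (smPtz hf), ptz_eq (smPz hf), U4_ptz hf, U4_pz hf]
  exact symm4 hf (w,z,tw,tz) e2 e4

lemma comm_ptw_ptz (hf : Smooth4 f) : ptw (ptz f) = ptz (ptw f) := by
  funext w z tw tz
  rw [ptw_eq (smPtz hf), ptz_eq (smPtw hf), U4_ptz hf, U4_ptw hf]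
  exact symm4 hf (w,z,tw,tz) e3 e4

end comm

section slices

variable {f : ℂ → ℂ → ℂ → ℂ → ℂ}

lemma diff1 (hf : Smooth4 f) (z tw tz : ℂ) :
    Differentiable ℂ (fun t => f t z tw tz) :=
  (hf.differentiable (by simp)).comp
    (differentiable_id.prodMk ((differentiable_const _).prodMk
      ((differentiable_const _).prodMk (differentiable_const _))))

lemma diff2 (hf : Smooth4 f) (w tw tz : ℂ) :
    Differentiable ℂ (fun t => f w t tw tz) :=
  (hf.differentiable (by simp)).comp
    ((differentiable_const _).prodMk (differentiable_id.prodMk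
      ((differentiable_const _).prodMk (differentiable_const _))))

lemma diff3 (hf : Smooth4 f) (w z tz : ℂ) :
    Differentiable ℂ (fun t => f w z t tz) :=
  (hf.differentiable (by simp)).comp
    ((differentiable_const _).prodMk ((differentiable_const _).prodMk
      (differentiable_id.prodMk (differentiable_const _))))

lemma diff4 (hf : Smooth4 f) (w z tw : ℂ) :
    Differentiable ℂ (fun t => f w z tw t) :=
  (hf.differentiable (by simp)).comp
    ((differentiable_const _).prodMk ((differentiable_const _).prodMk
      ((differentiable_const _).prodMk differentiable_id)))

end slices

section comb

variable {a b c d e : ℂ → ℂ → ℂ → ℂ → ℂ}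

lemma pw_comb (ha : Smooth4 a) (hb : Smooth4 b) (hc : Smooth4 c) (hd : Smooth4 d)
    (he : Smooth4 e) (lam w z tw tz : ℂ) :
    pw (fun w z tw tz => a w z tw tz * b w z tw tz - c w z tw tz * d w z tw tz
        - lam * e w z tw tz) w z tw tz
    = pw a w z tw tz * b w z tw tz + a w z tw tz * pw b w z tw tz
      - (pw c w z tw tz * d w z tw tz + c w z tw tz * pw d w z tw tz)
      - lam * pw e w z tw tz := by
  have da := diff1 ha z tw tz w
  have db := diff1 hb z tw tz w
  have dc := diff1 hc z tw tz w
  have dd := diff1 hd z tw tz w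
  have de := diff1 he z tw tz w
  show deriv (fun t => a t z tw tz * b t z tw tz - c t z tw tz * d t z tw tz
      - lam * e t z tw tz) w = _
  rw [deriv_fun_sub ((da.fun_mul db).fun_sub (dc.fun_mul dd)) (de.const_mul lam),
    deriv_fun_sub (da.fun_mul db) (dc.fun_mul dd), deriv_fun_mul da db, deriv_fun_mul dc dd,
    deriv_const_mul lam de]
  rfl

lemma pz_comb (ha : Smooth4 a) (hb : Smooth4 b) (hc : Smooth4 c) (hd : Smooth4 d)
    (he : Smooth4 e) (lam w z tw tz : ℂ) :
    pz (fun w z tw tz => a w z tw tz * b w z tw tz - c w z tw tz * d w z tw tz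
        - lam * e w z tw tz) w z tw tz
    = pz a w z tw tz * b w z tw tz + a w z tw tz * pz b w z tw tz
      - (pz c w z tw tz * d w z tw tz + c w z tw tz * pz d w z tw tz)
      - lam * pz e w z tw tz := by
  have da := diff2 ha w tw tz z
  have db := diff2 hb w tw tz z
  have dc := diff2 hc w tw tz z
  have dd := diff2 hd w tw tz z
  have de := diff2 he w tw tz z
  show deriv (fun t => a w t tw tz * b w t tw tz - c w t tw tz * d w t tw tz
      - lam * e w t tw tz) z = _
  rw [deriv_fun_sub ((da.fun_mul db).fun_sub (dc.fun_mul dd)) (de.const_mul lam),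
    deriv_fun_sub (da.fun_mul db) (dc.fun_mul dd), deriv_fun_mul da db, deriv_fun_mul dc dd,
    deriv_const_mul lam de]
  rfl

lemma ptw_comb (ha : Smooth4 a) (hb : Smooth4 b) (hc : Smooth4 c) (hd : Smooth4 d)
    (he : Smooth4 e) (lam w z tw tz : ℂ) :
    ptw (fun w z tw tz => a w z tw tz * b w z tw tz - c w z tw tz * d w z tw tz
        - lam * e w z tw tz) w z tw tz
    = ptw a w z tw tz * b w z tw tz + a w z tw tz * ptw b w z tw tz
      - (ptw c w z tw tz * d w z tw tz + c w z tw tz * ptw d w z tw tz)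
      - lam * ptw e w z tw tz := by
  have da := diff3 ha w z tz tw
  have db := diff3 hb w z tz tw
  have dc := diff3 hc w z tz tw
  have dd := diff3 hd w z tz tw
  have de := diff3 he w z tz tw
  show deriv (fun t => a w z t tz * b w z t tz - c w z t tz * d w z t tz
      - lam * e w z t tz) tw = _
  rw [deriv_fun_sub ((da.fun_mul db).fun_sub (dc.fun_mul dd)) (de.const_mul lam),
    deriv_fun_sub (da.fun_mul db) (dc.fun_mul dd), deriv_fun_mul da db, deriv_fun_mul dc dd,
    deriv_const_mul lam de]
  rfl

lemma ptz_comb (ha : Smooth4 a) (hb : Smooth4 b) (hc : Smooth4 c) (hd : Smooth4 d)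
    (he : Smooth4 e) (lam w z tw tz : ℂ) :
    ptz (fun w z tw tz => a w z tw tz * b w z tw tz - c w z tw tz * d w z tw tz
        - lam * e w z tw tz) w z tw tz
    = ptz a w z tw tz * b w z tw tz + a w z tw tz * ptz b w z tw tz
      - (ptz c w z tw tz * d w z tw tz + c w z tw tz * ptz d w z tw tz)
      - lam * ptz e w z tw tz := by
  have da := diff4 ha w z tw tz
  have db := diff4 hb w z tw tz
  have dc := diff4 hc w z tw tz
  have dd := diff4 hd w z tw tz
  have de := diff4 he w z tw tz
  show deriv (fun t => a w z tw t * b w z tw t - c w z tw t * d w z tw t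
      - lam * e w z tw t) tz = _
  rw [deriv_fun_sub ((da.fun_mul db).fun_sub (dc.fun_mul dd)) (de.const_mul lam),
    deriv_fun_sub (da.fun_mul db) (dc.fun_mul dd), deriv_fun_mul da db, deriv_fun_mul dc dd,
    deriv_const_mul lam de]
  rfl

lemma ptw_prod2 (ha : Smooth4 a) (hb : Smooth4 b) (hc : Smooth4 c) (hd : Smooth4 d)
    (w z tw tz : ℂ) :
    ptw (fun w z tw tz => a w z tw tz * b w z tw tz - c w z tw tz * d w z tw tz)
        w z tw tz
    = ptw a w z tw tz * b w z tw tz + a w z tw tz * ptw b w z tw tz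
      - (ptw c w z tw tz * d w z tw tz + c w z tw tz * ptw d w z tw tz) := by
  have da := diff3 ha w z tz tw
  have db := diff3 hb w z tz tw
  have dc := diff3 hc w z tz tw
  have dd := diff3 hd w z tz tw
  show deriv (fun t => a w z t tz * b w z t tz - c w z t tz * d w z t tz) tw = _
  rw [deriv_fun_sub (da.fun_mul db) (dc.fun_mul dd), deriv_fun_mul da db, deriv_fun_mul dc dd]
  rfl

lemma ptz_prod2 (ha : Smooth4 a) (hb : Smooth4 b) (hc : Smooth4 c) (hd : Smooth4 d)
    (w z tw tz : ℂ) :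
    ptz (fun w z tw tz => a w z tw tz * b w z tw tz - c w z tw tz * d w z tw tz)
        w z tw tz
    = ptz a w z tw tz * b w z tw tz + a w z tw tz * ptz b w z tw tz
      - (ptz c w z tw tz * d w z tw tz + c w z tw tz * ptz d w z tw tz) := by
  have da := diff4 ha w z tw tz
  have db := diff4 hb w z tw tz
  have dc := diff4 hc w z tw tz
  have dd := diff4 hd w z tw tz
  show deriv (fun t => a w z tw t * b w z tw t - c w z tw t * d w z tw t) tz = _
  rw [deriv_fun_sub (da.fun_mul db) (dc.fun_mul dd), deriv_fun_mul da db, deriv_fun_mul dc dd]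
  rfl

end comb

end HeavenlyAux

open HeavenlyAux in
/-- If Ω solves the first heavenly equation Ω_{wz̃}Ω_{zw̃} − Ω_{ww̃}Ω_{zz̃} = 1
then the Lax pair commutes: [L₀, L₁] = 0 on smooth functions, for every λ. -/
theorem lax_pair_commutes_first_heavenly
    (Ω : ℂ → ℂ → ℂ → ℂ → ℂ) (hΩ : Smooth4 Ω)
    (heav : ∀ w z tw tz : ℂ,
      ptz (pw Ω) w z tw tz * ptw (pz Ω) w z tw tz
        - ptw (pw Ω) w z tw tz * ptz (pz Ω) w z tw tz = 1) :
    ∀ (lam : ℂ) (f : ℂ → ℂ → ℂ → ℂ → ℂ), Smooth4 f →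
      ∀ w z tw tz : ℂ,
        LaxL0 Ω lam (LaxL1 Ω lam f) w z tw tz
          = LaxL1 Ω lam (LaxL0 Ω lam f) w z tw tz := by
  intro lam f hf w z tw tz
  have hΩw : Smooth4 (pw Ω) := smPw hΩ
  have hΩz : Smooth4 (pz Ω) := smPz hΩ
  have hA : Smooth4 (ptw (pw Ω)) := smPtw hΩw
  have hB : Smooth4 (ptz (pw Ω)) := smPtz hΩw
  have hC : Smooth4 (ptw (pz Ω)) := smPtw hΩz
  have hD : Smooth4 (ptz (pz Ω)) := smPtz hΩz
  have hfw : Smooth4 (pw f) := smPw hf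
  have hfz : Smooth4 (pz f) := smPz hf
  have hftw : Smooth4 (ptw f) := smPtw hf
  have hftz : Smooth4 (ptz f) := smPtz hf
  -- the heavenly equation differentiated in w̃
  have h0tw : ptw (fun w z tw tz => ptz (pw Ω) w z tw tz * ptw (pz Ω) w z tw tz
      - ptw (pw Ω) w z tw tz * ptz (pz Ω) w z tw tz) w z tw tz = 0 := by
    show deriv (fun t => ptz (pw Ω) w z t tz * ptw (pz Ω) w z t tz
      - ptw (pw Ω) w z t tz * ptz (pz Ω) w z t tz) tw = 0
    rw [show (fun t => ptz (pw Ω) w z t tz * ptw (pz Ω) w z t tz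
      - ptw (pw Ω) w z t tz * ptz (pz Ω) w z t tz) = fun _ => (1:ℂ) from
      funext fun t => heav w z t tz]
    exact deriv_const tw 1
  rw [ptw_prod2 hB hC hA hD w z tw tz] at h0tw
  -- the heavenly equation differentiated in z̃
  have h0tz : ptz (fun w z tw tz => ptz (pw Ω) w z tw tz * ptw (pz Ω) w z tw tz
      - ptw (pw Ω) w z tw tz * ptz (pz Ω) w z tw tz) w z tw tz = 0 := by
    show deriv (fun t => ptz (pw Ω) w z tw t * ptw (pz Ω) w z tw t
      - ptw (pw Ω) w z tw t * ptz (pz Ω) w z tw t) tz = 0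
    rw [show (fun t => ptz (pw Ω) w z tw t * ptw (pz Ω) w z tw t
      - ptw (pw Ω) w z tw t * ptz (pz Ω) w z tw t) = fun _ => (1:ℂ) from
      funext fun t => heav w z tw t]
    exact deriv_const tz 1
  rw [ptz_prod2 hB hC hA hD w z tw tz] at h0tz
  -- canonicalize mixed partials in the differentiated identities
  rw [comm_ptw_ptz hΩw, comm_ptw_ptz hΩz] at h0tw
  -- expand the commutator
  have hL1 : LaxL1 Ω lam f = fun w z tw tz =>
      ptw (pz Ω) w z tw tz * ptz f w z tw tz
        - ptz (pz Ω) w z tw tz * ptw f w z tw tz - lam * pz f w z tw tz := rfl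
  have hL0 : LaxL0 Ω lam f = fun w z tw tz =>
      ptw (pw Ω) w z tw tz * ptz f w z tw tz
        - ptz (pw Ω) w z tw tz * ptw f w z tw tz - lam * pw f w z tw tz := rfl
  rw [hL1, hL0]
  simp only [LaxL0, LaxL1]
  rw [ptz_comb hC hftz hD hftw hfz lam w z tw tz,
      ptw_comb hC hftz hD hftw hfz lam w z tw tz,
      pw_comb  hC hftz hD hftw hfz lam w z tw tz,
      ptz_comb hA hftz hB hftw hfw lam w z tw tz,
      ptw_comb hA hftz hB hftw hfw lam w z tw tz,
      pz_comb  hA hftz hB hftw hfw lam w z tw tz]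
  -- canonicalize all mixed partials
  rw [comm_ptw_ptz hf, comm_pw_ptz hf, comm_pw_ptw hf, comm_pw_pz hf,
      comm_pz_ptz hf, comm_pz_ptw hf,
      comm_ptw_ptz hΩw, comm_ptw_ptz hΩz,
      comm_pw_ptw hΩz, comm_pw_ptz hΩz,
      comm_pz_ptw hΩw, comm_pz_ptz hΩw,
      comm_pw_pz hΩ]
  linear_combination (ptw f w z tw tz) * h0tz - (ptz f w z tw tz) * h0tw
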